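/- For integers x, y, z (with binary representations of the same length after padding), x + y > z if and only if either (1) there exists k such that pre_k(x) + pre_k(y) = pre_k(z) + 1, or (2) there exists k such that pre_{k+1}(x) = 2·pre_k(x) + 1, pre_{k+1}(y) = 2·pre_k(y) + 1, pre_{k+1}(z) = 2·pre_k(z), and pre_k(z) = pre_k(x) + pre_k(y). Here pre_k(x) denotes the integer formed by the k most significant bits of x. -/

import Mathlib

/-- `pre L k x` is the integer given by the `k` most significant bits of `x`,
viewed as an `L`-bit number. -/
def pre (L k x : ℕ) : ℕ := x / 2 ^ (L - k)

lemma pre_zero (L x : ℕ) (hx : x < 2 ^ L) : pre L 0 x = 0 := by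
  simp [pre, Nat.div_eq_of_lt hx]

lemma pre_self (L x : ℕ) : pre L L x = x := by simp [pre]

lemma pre_succ_div (L k x : ℕ) (h : k + 1 ≤ L) :
    pre L k x = pre L (k + 1) x / 2 := by
  unfold pre
  rw [Nat.div_div_eq_div_mul, ← pow_succ]
  congr 2
  omega

lemma pre_step (L k x : ℕ) (h : k + 1 ≤ L) :
    pre L (k + 1) x = 2 * pre L k x + pre L (k + 1) x % 2 := by
  rw [pre_succ_div L k x h]
  omega

lemma pre_lb (L k x : ℕ) : pre L k x * 2 ^ (L - k) ≤ x :=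
  Nat.div_mul_le_self x _

lemma pre_ub (L k x : ℕ) : x < (pre L k x + 1) * 2 ^ (L - k) := by
  have hb : 0 < 2 ^ (L - k) := Nat.pow_pos (by norm_num)
  have h1 := Nat.div_add_mod x (2 ^ (L - k))
  have h2 := Nat.mod_lt x hb
  unfold pre
  nlinarith [Nat.zero_le (x / 2 ^ (L - k))]

theorem stmt_0 (L x y z : ℕ) (hx : x < 2 ^ L) (hy : y < 2 ^ L) (hz : z < 2 ^ L) :
    x + y > z ↔
      (∃ k ≤ L, pre L k x + pre L k y = pre L k z + 1) ∨
      (∃ k, k + 1 ≤ L ∧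
        pre L (k + 1) x = 2 * pre L k x + 1 ∧
        pre L (k + 1) y = 2 * pre L k y + 1 ∧
        pre L (k + 1) z = 2 * pre L k z ∧
        pre L k z = pre L k x + pre L k y) := by
  constructor
  · intro hgt
    by_contra hcon
    push_neg at hcon
    obtain ⟨h1, h2⟩ := hcon
    have key : ∀ k, k ≤ L → pre L k x + pre L k y ≤ pre L k z := by
      intro k
      induction k with
      | zero =>
        intro _
        simp [pre_zero L x hx, pre_zero L y hy, pre_zero L z hz]
      | succ k ih =>
        intro hk
        have hxy := ih (by omega)
        have hx1 := pre_step L k x hk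
        have hy1 := pre_step L k y hk
        have hz1 := pre_step L k z hk
        have hbx : pre L (k + 1) x % 2 < 2 := Nat.mod_lt _ (by norm_num)
        have hby : pre L (k + 1) y % 2 < 2 := Nat.mod_lt _ (by norm_num)
        have hbz : pre L (k + 1) z % 2 < 2 := Nat.mod_lt _ (by norm_num)
        have hn1 := h1 (k + 1) hk
        have hn2 := h2 k
        have hn2' := hn2 hk
        omega
    have := key L le_rfl
    rw [pre_self, pre_self, pre_self] at this
    omega
  · intro h
    have main : ∀ k, k ≤ L → pre L k z + 1 ≤ pre L k x + pre L k y → z < x + y := by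
      intro k hk hsum
      calc z < (pre L k z + 1) * 2 ^ (L - k) := pre_ub L k z
        _ ≤ (pre L k x + pre L k y) * 2 ^ (L - k) :=
            Nat.mul_le_mul_right _ hsum
        _ = pre L k x * 2 ^ (L - k) + pre L k y * 2 ^ (L - k) := by ring
        _ ≤ x + y := add_le_add (pre_lb L k x) (pre_lb L k y)
    rcases h with ⟨k, hk, heq⟩ | ⟨k, hk, ha, hb, hc, hd⟩
    · exact main k hk (by omega)
    · exact main (k + 1) hk (by omega)
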